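/- Let f and g be entire functions with no common zero, i.e., there is no z ∈ ℂ with f(z) = 0 and g(z) = 0. Then there exist entire functions u and v such that f(z)·u(z) + g(z)·v(z) = 1 for all z ∈ ℂ. -/

import Mathlib

open Metric Filter Set Function Complex Topology

/-- Entire approximation of a holomorphic function on a disk. -/
lemma polyapprox {F : ℂ → ℂ} {r : ℝ} (hr : 0 < r)
    (hF : DifferentiableOn ℂ F (Metric.ball 0 r)) {ε : ℝ} (hε : 0 < ε) :
    ∃ T : ℂ → ℂ, Differentiable ℂ T ∧ ∀ z ∈ Metric.closedBall (0:ℂ) (r/2), ‖F z - T z‖ ≤ ε := by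
  set R : NNReal := Real.toNNReal (3*r/4) with hR
  have hRcoe : (R : ℝ) = 3*r/4 := Real.coe_toNNReal _ (by linarith)
  have hRpos : 0 < R := by
    rw [← NNReal.coe_lt_coe, hRcoe]; norm_num; linarith
  have hF' : DifferentiableOn ℂ F (Metric.closedBall 0 (R:ℝ)) := by
    apply hF.mono (Metric.closedBall_subset_ball ?_)
    rw [hRcoe]; linarith
  have hball := hF'.hasFPowerSeriesOnBall hRpos
  set r' : NNReal := Real.toNNReal (5*r/8) with hr'
  have hr'coe : (r' : ℝ) = 5*r/8 := Real.coe_toNNReal _ (by linarith)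
  have h5 : (r' : ENNReal) < (R : ENNReal) := by
    rw [ENNReal.coe_lt_coe, ← NNReal.coe_lt_coe, hr'coe, hRcoe]; linarith
  have hu := hball.tendstoUniformlyOn h5
  rw [Metric.tendstoUniformlyOn_iff] at hu
  obtain ⟨n, hn⟩ := (hu ε hε).exists
  set p := cauchyPowerSeries F 0 (R:ℝ) with hp
  refine ⟨fun y => p.partialSum n y, ?_, ?_⟩
  · have hps : ∀ y : ℂ, p.partialSum n y
        = ∑ k ∈ Finset.range n, y ^ k • p.coeff k := by
      intro y
      unfold FormalMultilinearSeries.partialSum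
      exact Finset.sum_congr rfl fun k _ => p.apply_eq_pow_smul_coeff
    rw [funext hps]
    apply Differentiable.fun_sum
    intro k _
    simp only [smul_eq_mul]
    exact (differentiable_pow k).mul_const _
  · intro z hz
    have hz' : z ∈ Metric.ball (0:ℂ) (r':ℝ) := by
      rw [mem_ball, dist_zero_right]
      rw [mem_closedBall, dist_zero_right] at hz
      rw [hr'coe]; linarith
    have h2 := hn z hz'
    rw [dist_eq_norm] at h2
    simpa using h2.le

lemma dslope_diffOn {A : ℂ → ℂ} {a : ℂ} {ρ : ℝ} (hA : DifferentiableOn ℂ A (ball a ρ)) :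
    DifferentiableOn ℂ (dslope A a) (ball a ρ) := by
  intro z hz
  rcases eq_or_ne z a with rfl | hne
  · have hAz : AnalyticAt ℂ A z := hA.analyticAt (isOpen_ball.mem_nhds hz)
    obtain ⟨p, hp⟩ := hAz
    exact (hp.has_fpower_series_dslope_fslope.analyticAt.differentiableAt).differentiableWithinAt
  · exact (differentiableWithinAt_dslope_of_ne hne).2 (hA z hz)

lemma dslope_iter_diffOn {A : ℂ → ℂ} {a : ℂ} {ρ : ℝ} (hA : DifferentiableOn ℂ A (ball a ρ)) :
    ∀ j, DifferentiableOn ℂ ((Function.swap dslope a)^[j] A) (ball a ρ)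
  | 0 => hA
  | (j+1) => by
      rw [Function.iterate_succ_apply']
      exact dslope_diffOn (dslope_iter_diffOn hA j)

lemma dslope_expand (a : ℂ) : ∀ (k : ℕ) (A : ℂ → ℂ) (z : ℂ), z ≠ a →
    A z * ((z - a)^k)⁻¹ =
      (∑ j ∈ Finset.range k, ((Function.swap dslope a)^[j] A a) * ((z - a)^(k - j))⁻¹)
        + (Function.swap dslope a)^[k] A z := by
  intro k
  induction k with
  | zero => intro A z hz; simp
  | succ k ih =>
    intro A z hz
    have hza : z - a ≠ 0 := sub_ne_zero.mpr hz
    have hA : A z = A a + (z - a) * dslope A a z := by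
      have h1 := sub_smul_dslope A a z
      rw [smul_eq_mul] at h1
      linear_combination -h1
    have hiter : ∀ j, (Function.swap dslope a)^[j] (dslope A a)
        = (Function.swap dslope a)^[j+1] A := by
      intro j; rw [Function.iterate_succ_apply]
    have step : A z * ((z - a)^(k+1))⁻¹
        = A a * ((z - a)^(k+1))⁻¹ + (dslope A a z) * ((z - a)^k)⁻¹ := by
      rw [hA]; field_simp; ring
    rw [step, ih (dslope A a) z hz, Finset.sum_range_succ']
    rw [hiter k]
    have hsum : ∀ j ∈ Finset.range k,
        ((Function.swap dslope a)^[j] (dslope A a) a) * ((z - a)^(k - j))⁻¹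
        = ((Function.swap dslope a)^[j+1] A a) * ((z - a)^(k + 1 - (j+1)))⁻¹ := by
      intro j hj
      rw [hiter j, Nat.succ_sub_succ]
    rw [Finset.sum_congr rfl hsum]
    simp only [Function.iterate_zero, id_eq, Nat.sub_zero]
    ring

lemma not_eventually_zero {g : ℂ → ℂ} (hg : Differentiable ℂ g) {w : ℂ} (hw : g w ≠ 0)
    (s : ℂ) : ¬ (∀ᶠ z in 𝓝 s, g z = 0) := by
  intro hcon
  have hA : AnalyticOnNhd ℂ g Set.univ := analyticOnNhd_univ_iff_differentiable.mpr hg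
  have := hA.eqOn_zero_of_preconnected_of_eventuallyEq_zero isPreconnected_univ
    (Set.mem_univ s) (by filter_upwards [hcon] with z hz using hz)
  exact hw (this (Set.mem_univ w))

lemma local_factor {g : ℂ → ℂ} (hg : Differentiable ℂ g) {w : ℂ} (hw : g w ≠ 0)
    {f : ℂ → ℂ} (hf : Differentiable ℂ f) {s : ℂ} (hs : g s = 0) (hfs : f s ≠ 0) :
    ∃ (k : ℕ) (ρ : ℝ) (h : ℂ → ℂ), 0 < ρ ∧ 1 ≤ k ∧ DifferentiableOn ℂ h (ball s ρ) ∧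
      (∀ z ∈ ball s ρ, g z = (z - s)^k * h z ∧ h z ≠ 0 ∧ f z ≠ 0) := by
  have hga : AnalyticAt ℂ g s := hg.analyticAt s
  have hne := not_eventually_zero hg hw s
  have horder : analyticOrderAt g s ≠ ⊤ := fun hcon => hne (analyticOrderAt_eq_top.mp hcon)
  obtain ⟨k, hk⟩ := WithTop.ne_top_iff_exists.mp horder
  obtain ⟨h, hh, hh0, hfact⟩ := (hga.analyticOrderAt_eq_natCast (n := k)).1 hk.symm
  have hk1 : 1 ≤ k := by
    rcases Nat.eq_zero_or_pos k with h0 | h1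
    · exfalso
      have := hfact.self_of_nhds
      rw [h0] at this
      simp only [pow_zero, one_smul] at this
      exact hh0 (by rw [← this, hs])
    · exact h1
  have hev : ∀ᶠ z in 𝓝 s, AnalyticAt ℂ h z := hh.eventually_analyticAt
  have hev2 : ∀ᶠ z in 𝓝 s, h z ≠ 0 := hh.continuousAt.eventually_ne hh0
  have hev3 : ∀ᶠ z in 𝓝 s, f z ≠ 0 := (hf.continuous.continuousAt).eventually_ne hfs
  have hall := hfact.and (hev.and (hev2.and hev3))
  rw [Metric.eventually_nhds_iff_ball] at hall
  obtain ⟨ρ, hρ, hball⟩ := hall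
  refine ⟨k, ρ, h, hρ, hk1, ?_, ?_⟩
  · exact fun z hz => ((hball z hz).2.1.differentiableAt).differentiableWithinAt
  · intro z hz
    obtain ⟨h1, _, h2, h3⟩ := hball z hz
    exact ⟨by rw [h1, smul_eq_mul], h2, h3⟩

lemma zeros_finite_on_compact {g : ℂ → ℂ} (hg : Differentiable ℂ g) {w : ℂ} (hw : g w ≠ 0)
    {K : Set ℂ} (hK : IsCompact K) : ({z | g z = 0} ∩ K).Finite := by
  by_contra hinf
  rw [← Set.not_infinite, not_not] at hinf
  obtain ⟨x, hxK, hx⟩ := hinf.exists_accPt_of_subset_isCompact hK Set.inter_subset_right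
  have hxa : AnalyticAt ℂ g x := hg.analyticAt x
  rcases hxa.eventually_eq_zero_or_eventually_ne_zero with hcase | hcase
  · exact not_eventually_zero hg hw x hcase
  · rw [accPt_iff_frequently] at hx
    rw [eventually_nhdsWithin_iff] at hcase
    obtain ⟨z, hz1, hz2, hz3⟩ := (hcase.and_frequently hx).exists
    exact hz1 hz2 hz3.1

lemma mittag_leffler (a : ℕ → ℂ) (P : ℕ → ℂ → ℂ)
    (hP : ∀ n, DifferentiableOn ℂ (P n) {a n}ᶜ)
    (hfin : ∀ R : ℝ, {n | ‖a n‖ ≤ R ∧ P n ≠ 0}.Finite) :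
    ∃ M : ℂ → ℂ,
      (∀ z, (∀ n, P n ≠ 0 → z ≠ a n) → DifferentiableAt ℂ M z) ∧
      (∀ m, (∀ n, n ≠ m → P n ≠ 0 → a n ≠ a m) →
        ∃ δ > 0, ∃ Q : ℂ → ℂ, DifferentiableOn ℂ Q (Metric.ball (a m) δ) ∧
          ∀ z, M z = P m z + Q z) := by
  classical
  -- corrections
  have hT : ∀ n : ℕ, ∃ T : ℂ → ℂ, Differentiable ℂ T ∧
      ((0 < ‖a n‖ ∧ P n ≠ 0) →
        ∀ z ∈ closedBall (0:ℂ) (‖a n‖/2), ‖P n z - T z‖ ≤ (1/2:ℝ)^n) ∧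
      (P n = 0 → T = 0) := by
    intro n
    by_cases hn : 0 < ‖a n‖ ∧ P n ≠ 0
    · have hball : Metric.ball (0:ℂ) ‖a n‖ ⊆ {a n}ᶜ := by
        intro z hz
        rw [mem_ball, dist_zero_right] at hz
        intro hcon
        rw [Set.mem_singleton_iff] at hcon
        rw [hcon] at hz
        exact lt_irrefl _ hz
      obtain ⟨T, hT1, hT2⟩ := polyapprox hn.1 ((hP n).mono hball)
        (pow_pos (by norm_num : (0:ℝ) < 1/2) n)
      exact ⟨T, hT1, fun _ => hT2, fun hcon => absurd hcon hn.2⟩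
    · refine ⟨0, differentiable_const 0, fun hcon => absurd hcon hn, fun _ => rfl⟩
  choose T hTdiff hTbound hTzero using hT
  set F : ℕ → ℂ → ℂ := fun n z => P n z - T n z with hFdef
  have hF0 : ∀ n, P n = 0 → ∀ z, F n z = 0 := by
    intro n hn z
    simp only [hFdef, hTzero n hn, hn]
    simp
  -- key bound
  have key : ∀ (R : ℝ), 0 ≤ R → ∀ n, ¬(‖a n‖ ≤ 2*R + 2 ∧ P n ≠ 0) →
      ∀ z ∈ closedBall (0:ℂ) R, ‖F n z‖ ≤ (1/2:ℝ)^n := by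
    intro R hR n hn z hz
    by_cases hPn : P n = 0
    · rw [hF0 n hPn z]
      simp only [norm_zero]
      positivity
    · have han : 2*R + 2 < ‖a n‖ := by
        by_contra hcon
        push_neg at hcon
        exact hn ⟨hcon, hPn⟩
      refine hTbound n ⟨by linarith, hPn⟩ z ?_
      rw [mem_closedBall, dist_zero_right] at hz ⊢
      linarith
  have hgeo : Summable (fun n : ℕ => (1/2:ℝ)^n) := summable_geometric_two
  have hsum : ∀ z : ℂ, Summable (fun n => F n z) := by
    intro z
    apply Summable.of_norm_bounded_eventually hgeo
    have hfz := hfin (2*‖z‖+2)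
    filter_upwards [hfz.eventually_cofinite_notMem] with n hn
    exact key ‖z‖ (norm_nonneg z) n hn z (by simp)
  set M : ℂ → ℂ := fun z => ∑' n, F n z with hMdef
  have split : ∀ (B : Finset ℕ) (z : ℂ),
      M z = (∑ n ∈ B, F n z) + ∑' (n : ((B : Set ℕ)ᶜ : Set ℕ)), F n z :=
    fun B z => (Summable.sum_add_tsum_compl (hsum z)).symm
  have hMB : ∀ (R : ℝ), 0 ≤ R → ∀ (B : Finset ℕ),
      (∀ n, ‖a n‖ ≤ 2*R+4 ∧ P n ≠ 0 → n ∈ B) →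
      DifferentiableOn ℂ (fun z => ∑' (n : ((B : Set ℕ)ᶜ : Set ℕ)), F n z)
        (ball (0:ℂ) (R+1)) := by
    intro R hR B hB
    apply Complex.differentiableOn_tsum_of_summable_norm
      (u := fun n : ((B : Set ℕ)ᶜ : Set ℕ) => (1/2:ℝ)^(n:ℕ))
    · exact hgeo.comp_injective Subtype.coe_injective
    · rintro ⟨n, hn⟩
      by_cases hPn : P n = 0
      · have : F n = (fun _ => (0:ℂ)) := funext (hF0 n hPn)
        simp only [this]
        exact differentiableOn_const 0
      · have han : 2*R+4 < ‖a n‖ := by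
          by_contra hcon
          push_neg at hcon
          exact hn (hB n ⟨hcon, hPn⟩)
        apply DifferentiableOn.sub ?_ (hTdiff n).differentiableOn
        apply (hP n).mono
        intro z hz
        rw [mem_ball, dist_zero_right] at hz
        intro hcon
        rw [Set.mem_singleton_iff] at hcon
        rw [hcon] at hz
        linarith
    · exact isOpen_ball
    · rintro ⟨n, hn⟩ w hw
      refine key (R+1) (by linarith) n (fun hc => hn (hB n ⟨by linarith [hc.1], hc.2⟩)) w ?_
      rw [mem_ball, dist_zero_right] at hw
      rw [mem_closedBall, dist_zero_right]
      linarith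
  refine ⟨M, ?_, ?_⟩
  · intro z hz
    set R := ‖z‖ with hRdef
    set B := (hfin (2*R+4)).toFinset with hBdef
    have heq : M = fun w => (∑ n ∈ B, F n w)
        + ∑' (n : ((B : Set ℕ)ᶜ : Set ℕ)), F n w := funext (split B)
    rw [heq]
    apply DifferentiableAt.add
    · apply DifferentiableAt.fun_sum
      intro n _
      by_cases hPn : P n = 0
      · have : F n = (fun _ => (0:ℂ)) := funext (hF0 n hPn)
        simp only [this]
        exact differentiableAt_const 0
      · exact ((hP n).differentiableAt
          (compl_singleton_mem_nhds (hz n hPn))).sub ((hTdiff n) z)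
    · refine (hMB R (norm_nonneg z) B ?_).differentiableAt
        (isOpen_ball.mem_nhds ?_)
      · intro n hn
        rw [hBdef, Set.Finite.mem_toFinset]
        exact hn
      · rw [mem_ball, dist_zero_right]
        linarith
  · intro m hm
    set R := ‖a m‖ with hRdef
    set B := insert m (hfin (2*R+4)).toFinset with hBdef
    have hmB : m ∈ B := Finset.mem_insert_self m _
    have hBall : ∀ n, ‖a n‖ ≤ 2*R+4 ∧ P n ≠ 0 → n ∈ B := by
      intro n hn
      rw [hBdef, Finset.mem_insert, Set.Finite.mem_toFinset]
      exact Or.inr hn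
    -- the finite set of other pole locations
    set Pts : Finset ℂ := ((B.erase m).filter (fun n => P n ≠ 0)).image a with hPts
    have hamPts : a m ∉ Pts := by
      rw [hPts]
      intro hcon
      rw [Finset.mem_image] at hcon
      obtain ⟨n, hn, hcon⟩ := hcon
      rw [Finset.mem_filter, Finset.mem_erase] at hn
      exact hm n hn.1.1 hn.2 hcon
    have hopen : IsOpen ((Pts : Set ℂ))ᶜ := (Pts.finite_toSet.isClosed).isOpen_compl
    obtain ⟨δ₀, hδ₀, hballPts⟩ := Metric.isOpen_iff.mp hopen (a m) (by simpa using hamPts)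
    set δ := min δ₀ 1 with hδdef
    have hδpos : 0 < δ := lt_min hδ₀ one_pos
    refine ⟨δ, hδpos, fun z => (∑ n ∈ B.erase m, F n z)
      + (∑' (n : ((B : Set ℕ)ᶜ : Set ℕ)), F n z) - T m z, ?_, ?_⟩
    · apply DifferentiableOn.sub ?_ (hTdiff m).differentiableOn
      apply DifferentiableOn.add
      · apply DifferentiableOn.fun_sum
        intro n hn
        by_cases hPn : P n = 0
        · have : F n = (fun _ => (0:ℂ)) := funext (hF0 n hPn)
          simp only [this]
          exact differentiableOn_const 0
        · apply DifferentiableOn.sub ?_ (hTdiff n).differentiableOn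
          apply (hP n).mono
          intro z hz
          intro hcon
          rw [Set.mem_singleton_iff] at hcon
          have haPts : a n ∈ Pts := by
            rw [hPts, Finset.mem_image]
            exact ⟨n, by rw [Finset.mem_filter]; exact ⟨hn, hPn⟩, rfl⟩
          have := hballPts (ball_subset_ball (min_le_left δ₀ 1) (hcon ▸ hz))
          exact this haPts
      · apply (hMB R (norm_nonneg _) B hBall).mono
        intro z hz
        rw [mem_ball] at hz ⊢
        rw [dist_zero_right]
        calc ‖z‖ ≤ dist z (a m) + ‖a m‖ := by
              rw [dist_eq_norm]
              simpa using norm_add_le (z - a m) (a m)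
          _ < δ + R := by rw [hRdef]; exact add_lt_add_left hz _
          _ ≤ 1 + R := add_le_add_left (min_le_right δ₀ 1) _
          _ = R + 1 := by ring
    · intro z
      rw [split B z, ← Finset.add_sum_erase B _ hmB]
      simp only [hFdef]
      ring

/-- Entire functions with no common zero generate the unit ideal:
there are entire `u`, `v` with `f·u + g·v = 1`. -/
theorem entire_bezout_identity_of_no_common_zero (f g : ℂ → ℂ)
    (hf : Differentiable ℂ f) (hg : Differentiable ℂ g)
    (h : ¬ ∃ z : ℂ, f z = 0 ∧ g z = 0) :
    ∃ u v : ℂ → ℂ, Differentiable ℂ u ∧ Differentiable ℂ v ∧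
      ∀ z : ℂ, f z * u z + g z * v z = 1 := by
  classical
  push_neg at h
  by_cases hgz : ∃ z, g z = 0
  swap
  · push_neg at hgz
    exact ⟨0, fun z => (g z)⁻¹, differentiable_const 0, hg.inv hgz,
      fun z => by field_simp [hgz z]; simp⟩
  obtain ⟨z₀', hz₀'⟩ := hgz
  by_cases hgw : ∃ w, g w ≠ 0
  swap
  · push_neg at hgw
    have hf0 : ∀ z, f z ≠ 0 := fun z hz => (h z hz) (hgw z)
    exact ⟨fun z => (f z)⁻¹, 0, hf.inv hf0, differentiable_const 0,
      fun z => by field_simp [hf0 z]; simp⟩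
  obtain ⟨w, hw⟩ := hgw
  have hfS : ∀ z, g z = 0 → f z ≠ 0 := fun z hz hfz => (h z hfz) hz
  set S := {z : ℂ | g z = 0} with hSdef
  have hfinK : ∀ R : ℝ, (S ∩ closedBall 0 R).Finite :=
    fun R => zeros_finite_on_compact hg hw (isCompact_closedBall 0 R)
  have hScount : S.Countable := by
    have hcover : S = ⋃ n : ℕ, (S ∩ closedBall 0 n) := by
      ext z
      simp only [Set.mem_iUnion, Set.mem_inter_iff, mem_closedBall, dist_zero_right]
      constructor
      · intro hz
        obtain ⟨n, hn⟩ := exists_nat_ge ‖z‖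
        exact ⟨n, hz, hn⟩
      · rintro ⟨n, hn, -⟩
        exact hn
    rw [hcover]
    exact Set.countable_iUnion fun n => (hfinK n).countable
  obtain ⟨a, ha⟩ := hScount.exists_eq_range ⟨z₀', hz₀'⟩
  have hgan : ∀ n, g (a n) = 0 := by
    intro n
    have : a n ∈ S := by rw [ha]; exact Set.mem_range_self n
    exact this
  -- local data
  have hLoc : ∀ s : ℂ, ∃ (k : ℕ) (ρ : ℝ) (hh : ℂ → ℂ), g s = 0 →
      (0 < ρ ∧ 1 ≤ k ∧ DifferentiableOn ℂ hh (ball s ρ) ∧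
        ∀ z ∈ ball s ρ, g z = (z - s)^k * hh z ∧ hh z ≠ 0 ∧ f z ≠ 0) := by
    intro s
    by_cases hs : g s = 0
    · obtain ⟨k, ρ, hh, h1, h2, h3, h4⟩ := local_factor hg hw hf hs (hfS s hs)
      exact ⟨k, ρ, hh, fun _ => ⟨h1, h2, h3, h4⟩⟩
    · exact ⟨1, 1, fun _ => 1, fun hc => absurd hc hs⟩
  choose K Rad H hLocAll using hLoc
  set c : ℂ → ℕ → ℂ :=
    fun s j => (Function.swap dslope s)^[j] (fun z => (f z * H s z)⁻¹) s with hcdef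
  set pp : ℂ → ℂ → ℂ :=
    fun s z => ∑ j ∈ Finset.range (K s), c s j * ((z - s)^(K s - j))⁻¹ with hppdef
  set P : ℕ → ℂ → ℂ :=
    fun n => if (∀ m < n, a m ≠ a n) then pp (a n) else 0 with hPdef
  have hppdiff : ∀ s : ℂ, DifferentiableOn ℂ (pp s) {s}ᶜ := by
    intro s
    apply DifferentiableOn.fun_sum
    intro j _
    apply DifferentiableOn.const_mul
    apply DifferentiableOn.inv
    · exact ((differentiable_id.sub_const s).pow _).differentiableOn
    · intro z hz
      exact pow_ne_zero _ (sub_ne_zero.mpr hz)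
  have hPdiff : ∀ n, DifferentiableOn ℂ (P n) {a n}ᶜ := by
    intro n
    by_cases hc : ∀ m < n, a m ≠ a n
    · have hPn : P n = pp (a n) := if_pos hc
      rw [hPn]; exact hppdiff (a n)
    · have hPn : P n = 0 := if_neg hc
      rw [hPn]; exact differentiableOn_const 0
  have hfinML : ∀ R : ℝ, {n | ‖a n‖ ≤ R ∧ P n ≠ 0}.Finite := by
    intro R
    have himg : (a '' {n | ‖a n‖ ≤ R ∧ P n ≠ 0}).Finite := by
      apply (hfinK R).subset
      rintro _ ⟨n, ⟨hn1, _⟩, rfl⟩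
      exact ⟨by rw [ha]; exact Set.mem_range_self n,
        by rw [mem_closedBall, dist_zero_right]; exact hn1⟩
    apply Set.Finite.of_finite_image himg
    rintro n ⟨_, hn2⟩ m ⟨_, hm2⟩ hnm
    by_contra hne
    have hfn : ∀ l < n, a l ≠ a n := by
      by_contra hcon
      exact hn2 (if_neg hcon)
    have hfm : ∀ l < m, a l ≠ a m := by
      by_contra hcon
      exact hm2 (if_neg hcon)
    rcases lt_trichotomy n m with hlt | heq | hlt
    · exact hfm n hlt hnm
    · exact hne heq
    · exact hfn m hlt hnm.symm
  obtain ⟨M, hM1, hM2⟩ := mittag_leffler a P hPdiff hfinML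
  set v₀ : ℂ → ℂ := fun z => (g z)⁻¹ - f z * M z with hv₀def
  set u : ℂ → ℂ := fun z => if g z = 0 then (f z)⁻¹ else g z * M z with hudef
  set v : ℂ → ℂ := fun z => if g z = 0 then limUnder (𝓝[≠] z) v₀ else v₀ z with hvdef
  have hopenS : IsOpen {z : ℂ | g z ≠ 0} :=
    isOpen_compl_singleton.preimage hg.continuous
  have hMoff : ∀ z, g z ≠ 0 → DifferentiableAt ℂ M z := by
    intro z hz
    apply hM1
    intro n _ hcon
    exact hz (by rw [hcon]; exact hgan n)
  -- differentiability away from zeros of g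
  have huoff : ∀ z, g z ≠ 0 → DifferentiableAt ℂ u z := by
    intro z hz
    have hev : u =ᶠ[𝓝 z] fun w => g w * M w := by
      filter_upwards [hopenS.mem_nhds hz] with y hy
      rw [hudef]; simp only; rw [if_neg hy]
    rw [hev.differentiableAt_iff]
    exact (hg z).mul (hMoff z hz)
  have hvoff : ∀ z, g z ≠ 0 → DifferentiableAt ℂ v z := by
    intro z hz
    have hev : v =ᶠ[𝓝 z] v₀ := by
      filter_upwards [hopenS.mem_nhds hz] with y hy
      rw [hvdef]; simp only; rw [if_neg hy]
    rw [hev.differentiableAt_iff]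
    apply DifferentiableAt.sub
    · exact ((hg z).inv hz)
    · exact (hf z).mul (hMoff z hz)
  -- differentiability at zeros of g
  have hlocal : ∀ s : ℂ, g s = 0 → DifferentiableAt ℂ u s ∧ DifferentiableAt ℂ v s := by
    intro s hgs
    have hex : ∃ n, a n = s := by
      have hmem : s ∈ Set.range a := by rw [← ha]; exact hgs
      exact hmem
    set m := Nat.find hex with hmdef
    have ham : a m = s := Nat.find_spec hex
    have hfirst : ∀ l < m, a l ≠ a m := by
      intro l hl hcon
      exact Nat.find_min hex hl (hcon.trans ham)
    have hguard : ∀ n, n ≠ m → P n ≠ 0 → a n ≠ a m := by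
      intro n hnm hPn hcon
      have hfn : ∀ l < n, a l ≠ a n := by
        by_contra hcon2
        exact hPn (if_neg hcon2)
      have hmn : m ≤ n := Nat.find_le (hcon.trans ham)
      exact hfn m (lt_of_le_of_ne hmn (Ne.symm hnm)) hcon.symm
    have hPm : P m = pp s := by
      have h1 : P m = pp (a m) := if_pos hfirst
      rw [h1, ham]
    obtain ⟨hρ, hk1, hHdiff, hball⟩ := hLocAll s hgs
    obtain ⟨δ, hδ, Q, hQ, hMPQ⟩ := hM2 m hguard
    rw [ham] at hQ
    set k := K s with hkdef
    set ρ := Rad s with hρdef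
    set ρ' := min ρ δ with hρ'def
    have hρ'pos : 0 < ρ' := lt_min hρ hδ
    have hsub1 : ball s ρ' ⊆ ball s ρ := ball_subset_ball (min_le_left _ _)
    have hsub2 : ball s ρ' ⊆ ball s δ := ball_subset_ball (min_le_right _ _)
    have hAdiff : DifferentiableOn ℂ (fun y => (f y * H s y)⁻¹) (ball s ρ) := by
      apply DifferentiableOn.inv
      · exact hf.differentiableOn.mul hHdiff
      · intro z hz
        exact mul_ne_zero (hball z hz).2.2 (hball z hz).2.1
    set D : ℂ → ℂ := (Function.swap dslope s)^[k] (fun y => (f y * H s y)⁻¹) with hDdef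
    have hDdiff : DifferentiableOn ℂ D (ball s ρ) := dslope_iter_diffOn hAdiff k
    have hptg : ∀ z ∈ ball s ρ', z ≠ s → g z ≠ 0 := by
      intro z hz hne
      rw [(hball z (hsub1 hz)).1]
      exact mul_ne_zero (pow_ne_zero _ (sub_ne_zero.mpr hne)) (hball z (hsub1 hz)).2.1
    have hMz : ∀ z, M z = pp s z + Q z := by intro z; rw [← hPm]; exact hMPQ z
    have hexp : ∀ z ∈ ball s ρ', z ≠ s →
        (f z * H s z)⁻¹ * ((z - s)^k)⁻¹ = pp s z + D z := by
      intro z hz hne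
      have hd := dslope_expand s k (fun y => (f y * H s y)⁻¹) z hne
      simp only [hppdef, hcdef, hDdef]
      exact hd
    have hHs : H s s ≠ 0 := (hball s (mem_ball_self hρ)).2.1
    have hfs : f s ≠ 0 := hfS s hgs
    -- local model for u
    set U : ℂ → ℂ := fun z => g z * Q z
        + H s z * ∑ j ∈ Finset.range k, c s j * (z - s)^j with hUdef
    have hUdiff : DifferentiableOn ℂ U (ball s ρ') := by
      apply DifferentiableOn.add
      · exact hg.differentiableOn.mul (hQ.mono hsub2)
      · apply DifferentiableOn.mul (hHdiff.mono hsub1)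
        apply DifferentiableOn.fun_sum
        intro j _
        exact (((differentiable_id.sub_const s).pow j).const_mul _).differentiableOn
    have huU : ∀ᶠ z in 𝓝 s, u z = U z := by
      filter_upwards [ball_mem_nhds s hρ'pos] with z hz
      rcases eq_or_ne z s with rfl | hne
      · rw [hudef]
        simp only [if_pos hgs]
        rw [hUdef]
        simp only
        rw [hgs, zero_mul, zero_add]
        have hsum0 : ∑ j ∈ Finset.range k, c z j * (z - z)^j = c z 0 := by
          rw [sub_self]
          rw [Finset.sum_eq_single 0]
          · simp
          · intro b _ hb0
            rw [zero_pow hb0, mul_zero]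
          · intro hb
            exact absurd (Finset.mem_range.mpr (by omega)) hb
        rw [hsum0]
        have hc0 : c z 0 = (f z * H z z)⁻¹ := by simp [hcdef]
        rw [hc0]
        field_simp
      · have hgz := hptg z hz hne
        rw [hudef]
        simp only [if_neg hgz]
        rw [hMz z, hUdef]
        simp only
        rw [mul_add, add_comm (g z * pp s z) (g z * Q z)]
        congr 1
        rw [hppdef]
        simp only
        rw [Finset.mul_sum, Finset.mul_sum]
        apply Finset.sum_congr rfl
        intro j hj
        rw [(hball z (hsub1 hz)).1]
        have hzs : (z - s) ≠ 0 := sub_ne_zero.mpr hne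
        have hjk : j ≤ k := le_of_lt (Finset.mem_range.mp hj)
        have hpow : (z - s)^k = (z - s)^(k - j) * (z - s)^j := by
          rw [← pow_add]
          congr 1
          omega
        rw [hpow]
        have hpowne : (z - s)^(k - j) ≠ 0 := pow_ne_zero _ hzs
        field_simp
        ring
    have hu_s : DifferentiableAt ℂ u s := by
      rw [Filter.EventuallyEq.differentiableAt_iff huU]
      exact hUdiff.differentiableAt (isOpen_ball.mem_nhds (mem_ball_self hρ'pos))
    -- local model for v
    set E : ℂ → ℂ := fun z => f z * (D z - Q z) with hEdef
    have hEdiff : DifferentiableOn ℂ E (ball s ρ') :=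
      hf.differentiableOn.mul ((hDdiff.mono hsub1).sub (hQ.mono hsub2))
    have hv₀E : ∀ z ∈ ball s ρ', z ≠ s → v₀ z = E z := by
      intro z hz hne
      have hfz : f z ≠ 0 := (hball z (hsub1 hz)).2.2
      have hHz : H s z ≠ 0 := (hball z (hsub1 hz)).2.1
      have hzs : z - s ≠ 0 := sub_ne_zero.mpr hne
      have hpowne : (z - s)^k ≠ 0 := pow_ne_zero _ hzs
      have hginv : (g z)⁻¹ = f z * ((f z * H s z)⁻¹ * ((z - s)^k)⁻¹) := by
        rw [(hball z (hsub1 hz)).1]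
        field_simp
      rw [hv₀def]
      simp only
      rw [hginv, hexp z hz hne, hMz z, hEdef]
      simp only
      ring
    have hevp : v₀ =ᶠ[𝓝[≠] s] E := by
      filter_upwards [mem_nhdsWithin_of_mem_nhds (ball_mem_nhds s hρ'pos),
        self_mem_nhdsWithin] with z hz hne
      exact hv₀E z hz hne
    have hEcont : ContinuousAt E s :=
      (hEdiff.differentiableAt (isOpen_ball.mem_nhds (mem_ball_self hρ'pos))).continuousAt
    have hElim : Filter.Tendsto v₀ (𝓝[≠] s) (𝓝 (E s)) :=
      Filter.Tendsto.congr' hevp.symm (hEcont.tendsto.mono_left nhdsWithin_le_nhds)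
    have hlim : limUnder (𝓝[≠] s) v₀ = E s := hElim.limUnder_eq
    have hvE : ∀ᶠ z in 𝓝 s, v z = E z := by
      filter_upwards [ball_mem_nhds s hρ'pos] with z hz
      rcases eq_or_ne z s with rfl | hne
      · rw [hvdef]
        simp only [if_pos hgs]
        exact hlim
      · have hgz := hptg z hz hne
        rw [hvdef]
        simp only [if_neg hgz]
        exact hv₀E z hz hne
    have hv_s : DifferentiableAt ℂ v s := by
      rw [Filter.EventuallyEq.differentiableAt_iff hvE]
      exact hEdiff.differentiableAt (isOpen_ball.mem_nhds (mem_ball_self hρ'pos))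
    exact ⟨hu_s, hv_s⟩
  refine ⟨u, v, ?_, ?_, ?_⟩
  · intro z
    by_cases hz : g z = 0
    · exact (hlocal z hz).1
    · exact huoff z hz
  · intro z
    by_cases hz : g z = 0
    · exact (hlocal z hz).2
    · exact hvoff z hz
  · intro z
    by_cases hz : g z = 0
    · rw [hudef, hvdef]
      simp only [if_pos hz]
      rw [hz]
      field_simp [hfS z hz]
      simp
    · rw [hudef, hvdef]
      simp only [if_neg hz]
      rw [hv₀def]
      field_simp
      ring
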